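/- Applying the column-removal construction to a k×n Youden rectangle always yields a k×(n−k) array on n−1 symbols that is equireplicate with replication number k−λ and has all pairwise column intersections of size exactly λ, regardless of which column is removed. -/

import Mathlib

open Finset Matrix

/-- The set of symbols occurring in column `j` of a `k × n` array. -/
def colSet {k n : ℕ} (A : Fin k → Fin n → Fin n) (j : Fin n) : Finset (Fin n) :=
  Finset.univ.image fun i => A i j

lemma mem_colSet_iff {k n : ℕ} (Y : Fin k → Fin n → Fin n) {s j : Fin n} :
    s ∈ colSet Y j ↔ ∃ i, Y i j = s := by
  simp [colSet]

lemma colSet_card {k n : ℕ} (Y : Fin k → Fin n → Fin n)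
    (hcol : ∀ j : Fin n, Function.Injective fun i => Y i j) (j : Fin n) :
    (colSet Y j).card = k := by
  rw [colSet, Finset.card_image_of_injective _ (hcol j), Finset.card_univ, Fintype.card_fin]

lemma replication {k n : ℕ} (Y : Fin k → Fin n → Fin n)
    (hrow : ∀ i, Function.Injective (Y i))
    (hcol : ∀ j : Fin n, Function.Injective fun i => Y i j) (s : Fin n) :
    (Finset.univ.filter fun j => s ∈ colSet Y j).card = k := by
  classical
  have hbij : ∀ i, Function.Bijective (Y i) := fun i =>
    Finite.injective_iff_bijective.mp (hrow i)
  let e : Fin k → (Fin n ≃ Fin n) := fun i => Equiv.ofBijective _ (hbij i)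
  let g : Fin k → Fin n := fun i => (e i).symm s
  have hg : ∀ i, Y i (g i) = s := fun i => (e i).apply_symm_apply s
  have hginj : Function.Injective g := by
    intro i i' h
    apply hcol (g i)
    show Y i (g i) = Y i' (g i)
    rw [hg i, h, hg i']
  have hset : (Finset.univ.filter fun j => s ∈ colSet Y j) = Finset.univ.image g := by
    ext j
    simp only [Finset.mem_filter, Finset.mem_univ, true_and, Finset.mem_image,
      mem_colSet_iff]
    constructor
    · rintro ⟨i, hi⟩
      refine ⟨i, ?_⟩
      have : (e i) j = s := hi
      simpa [g] using congrArg (e i).symm this |>.symm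
    · rintro ⟨i, rfl⟩
      exact ⟨i, hg i⟩
  rw [hset, Finset.card_image_of_injective _ hginj, Finset.card_univ, Fintype.card_fin]

theorem construction_on_youden (n k lam : ℕ) (hk : 1 < k) (hkn : k < n)
    (Y : Fin k → Fin n → Fin n)
    (hrow : ∀ i, Function.Injective (Y i))
    (hcol : ∀ j : Fin n, Function.Injective fun i => Y i j)
    (hdes : ∀ j j' : Fin n, j ≠ j' →
      ((colSet Y j) ∩ (colSet Y j')).card = lam) :
    ∀ c : Fin n,
      (Finset.univ \ colSet Y c).card = n - k ∧
      (∀ j : Fin n, j ≠ c → ((colSet Y j) \ (colSet Y c)).card = k - lam) ∧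
      (∀ s s' : Fin n, s ∉ colSet Y c → s' ∉ colSet Y c → s ≠ s' →
        (Finset.univ.filter fun j : Fin n =>
          j ≠ c ∧ s ∈ colSet Y j ∧ s' ∈ colSet Y j).card = lam) := by
  classical
  intro c
  have hnt : Nontrivial (Fin n) := Fin.nontrivial_iff_two_le.mpr (by omega)
  -- lam ≤ k
  obtain ⟨j₀, hj₀⟩ := exists_ne c
  have hlamle : lam ≤ k := by
    have hsub : colSet Y j₀ ∩ colSet Y c ⊆ colSet Y j₀ := Finset.inter_subset_left
    have h := Finset.card_le_card hsub
    rwa [hdes j₀ c hj₀, colSet_card Y hcol j₀] at h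
  -- lam < k
  have hlamlt : lam < k := by
    rcases lt_or_eq_of_le hlamle with h | h
    · exact h
    · exfalso
      -- all columns equal colSet Y c
      have hall : ∀ j : Fin n, colSet Y j = colSet Y c := by
        intro j
        by_cases hj : j = c
        · rw [hj]
        · have h1 : (colSet Y j ∩ colSet Y c).card = (colSet Y j).card := by
            rw [hdes j c hj, colSet_card Y hcol j, h]
          have h2 : colSet Y j ⊆ colSet Y c := by
            have := Finset.eq_of_subset_of_card_le Finset.inter_subset_left
              (le_of_eq h1.symm)
            intro x hx
            have hx' : x ∈ colSet Y j ∩ colSet Y c := by rw [this]; exact hx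
            exact (Finset.mem_inter.mp hx').2
          exact Finset.eq_of_subset_of_card_le h2
            (by rw [colSet_card Y hcol, colSet_card Y hcol])
      obtain ⟨s, hs⟩ := Finset.card_pos.mp
        (by rw [colSet_card Y hcol c]; omega : 0 < (colSet Y c).card)
      have : (Finset.univ.filter fun j => s ∈ colSet Y j).card = n := by
        rw [Finset.filter_true_of_mem, Finset.card_univ, Fintype.card_fin]
        intro j _; rw [hall j]; exact hs
      rw [replication Y hrow hcol s] at this
      omega
  refine ⟨?_, ?_, ?_⟩
  · rw [Finset.card_sdiff_of_subset (Finset.subset_univ _), Finset.card_univ, Fintype.card_fin,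
      colSet_card Y hcol]
  · intro j hj
    have h1 := Finset.card_sdiff_add_card_inter (colSet Y j) (colSet Y c)
    rw [hdes j c hj, colSet_card Y hcol j] at h1
    omega
  · intro s s' hs hs' hss
    -- incidence matrix argument
    set N : Matrix (Fin n) (Fin n) ℚ :=
      Matrix.of fun s j => if s ∈ colSet Y j then 1 else 0 with hN
    set J : Matrix (Fin n) (Fin n) ℚ := Matrix.of fun _ _ => 1 with hJ
    have hNJ : N * J = (k : ℚ) • J := by
      ext a b
      simp only [Matrix.mul_apply, Matrix.smul_apply, hN, hJ, Matrix.of_apply, mul_one,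
        smul_eq_mul]
      rw [Finset.sum_boole, replication Y hrow hcol a]
    have hJN : J * N = (k : ℚ) • J := by
      ext a b
      simp only [Matrix.mul_apply, Matrix.smul_apply, hN, hJ, Matrix.of_apply, one_mul,
        smul_eq_mul, mul_one]
      rw [Finset.sum_boole]
      have : Finset.univ.filter (fun x => x ∈ colSet Y b) = colSet Y b := by
        ext x; simp
      rw [this, colSet_card Y hcol]
    have hJJ : J * J = (n : ℚ) • J := by
      ext a b
      simp [Matrix.mul_apply, hJ]
    set B : Matrix (Fin n) (Fin n) ℚ := ((k : ℚ) - lam) • 1 + (lam : ℚ) • J with hB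
    have hNtN : Nᵀ * N = B := by
      ext a b
      simp only [Matrix.mul_apply, Matrix.transpose_apply, hN, Matrix.of_apply, hB,
        Matrix.add_apply, Matrix.smul_apply, Matrix.one_apply, hJ, smul_eq_mul, mul_one]
      have : ∀ x : Fin n, (if x ∈ colSet Y a then (1:ℚ) else 0) *
          (if x ∈ colSet Y b then 1 else 0) =
          if x ∈ colSet Y a ∩ colSet Y b then 1 else 0 := by
        intro x
        by_cases h1 : x ∈ colSet Y a <;> by_cases h2 : x ∈ colSet Y b <;>
          simp [h1, h2]
      rw [Finset.sum_congr rfl fun x _ => this x, Finset.sum_boole]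
      have hfil : Finset.univ.filter (fun x => x ∈ colSet Y a ∩ colSet Y b) =
          colSet Y a ∩ colSet Y b := by ext x; simp
      rw [hfil]
      by_cases hab : a = b
      · subst hab
        simp only [if_pos rfl, Finset.inter_self, colSet_card Y hcol]
        norm_num
      · rw [hdes a b hab, if_neg hab]
        ring
    -- explicit inverse of B
    have ha : ((k : ℚ) - lam) ≠ 0 := by
      have : (lam : ℚ) < k := by exact_mod_cast hlamlt
      linarith
    have hab2 : ((k : ℚ) - lam + n * lam) ≠ 0 := by
      have h1 : (lam : ℚ) < k := by exact_mod_cast hlamlt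
      have h2 : (0:ℚ) ≤ (n : ℚ) * lam := by positivity
      linarith
    set d : ℚ := -(lam : ℚ) / (((k : ℚ) - lam) * ((k : ℚ) - lam + n * lam)) with hd
    set M : Matrix (Fin n) (Fin n) ℚ := (1 / ((k : ℚ) - lam)) • 1 + d • J with hM
    have key : ∀ a b a' b' : ℚ, (a • (1 : Matrix (Fin n) (Fin n) ℚ) + b • J) *
        (a' • 1 + b' • J) = (a * a') • 1 + (a * b' + b * a' + b * b' * n) • J := by
      intro a b a' b'
      simp only [Matrix.add_mul, Matrix.mul_add, Matrix.smul_mul, Matrix.mul_smul,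
        Matrix.one_mul, Matrix.mul_one, hJJ, smul_smul]
      module
    have hMB : M * B = 1 := by
      rw [hM, hB, key]
      have e1 : 1 / ((k : ℚ) - lam) * ((k : ℚ) - lam) = 1 := by field_simp
      have e2 : 1 / ((k : ℚ) - lam) * (lam : ℚ) + d * ((k : ℚ) - lam) +
          d * (lam : ℚ) * n = 0 := by
        have hX : d * ((k : ℚ) - lam + n * lam) = -(lam : ℚ) / ((k : ℚ) - lam) := by
          rw [hd, ← div_div, div_mul_cancel₀ _ hab2]
        linear_combination hX
      rw [e1, e2, one_smul, zero_smul, add_zero]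
    have hNM : N * (M * Nᵀ) = 1 := by
      have h1 : (M * Nᵀ) * N = 1 := by rw [Matrix.mul_assoc, hNtN, hMB]
      exact mul_eq_one_comm.mp h1
    have hcomm : N * B = B * N := by
      rw [hB]
      simp only [Matrix.mul_add, Matrix.add_mul, Matrix.mul_smul, Matrix.smul_mul,
        Matrix.mul_one, Matrix.one_mul, hNJ, hJN]
    have hNNt : N * Nᵀ = B := by
      calc N * Nᵀ = (N * Nᵀ) * (N * (M * Nᵀ)) := by rw [hNM, Matrix.mul_one]
        _ = (N * (Nᵀ * N)) * (M * Nᵀ) := by simp only [Matrix.mul_assoc]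
        _ = (B * N) * (M * Nᵀ) := by rw [hNtN, hcomm]
        _ = B * (N * (M * Nᵀ)) := by rw [Matrix.mul_assoc]
        _ = B := by rw [hNM, Matrix.mul_one]
    have hentry := congrArg (fun A : Matrix (Fin n) (Fin n) ℚ => A s s') hNNt
    simp only [Matrix.mul_apply, Matrix.transpose_apply, hN, Matrix.of_apply, hB,
      Matrix.add_apply, Matrix.smul_apply, Matrix.one_apply, hJ, if_neg hss,
      smul_eq_mul, mul_zero, mul_one, zero_add] at hentry
    have hprod : ∀ j : Fin n, (if s ∈ colSet Y j then (1:ℚ) else 0) *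
        (if s' ∈ colSet Y j then 1 else 0) =
        if s ∈ colSet Y j ∧ s' ∈ colSet Y j then 1 else 0 := by
      intro j
      by_cases h1 : s ∈ colSet Y j <;> by_cases h2 : s' ∈ colSet Y j <;> simp [h1, h2]
    rw [Finset.sum_congr rfl fun j _ => hprod j, Finset.sum_boole] at hentry
    have hcard : (Finset.univ.filter fun j => s ∈ colSet Y j ∧ s' ∈ colSet Y j).card
        = lam := by exact_mod_cast hentry
    have hfeq : (Finset.univ.filter fun j : Fin n =>
        j ≠ c ∧ s ∈ colSet Y j ∧ s' ∈ colSet Y j) =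
        Finset.univ.filter fun j => s ∈ colSet Y j ∧ s' ∈ colSet Y j := by
      ext j
      simp only [Finset.mem_filter, Finset.mem_univ, true_and]
      constructor
      · rintro ⟨_, h⟩; exact h
      · intro h; exact ⟨fun hjc => hs (hjc ▸ h.1), h⟩
    rw [hfeq, hcard]
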